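/- Assume z = 0 and Ω ≠ 0. Then: W(u) = -2Ω·u; W(w) = Ω·w for every w ∈ V with B(u,w) = 0; (W - Ω·id) ∘ (W + 2Ω·id) = 0; and W - Ω·id ≠ 0 ≠ W + 2Ω·id. Hence W is diagonalizable with exactly the two distinct eigenvalues Ω (double) and -2Ω (simple), and u is an eigenvector for the simple eigenvalue. (The algebraic content of case (iii) of Theorem 4 and of Proposition 4 of the paper: Petrov–Bel type D, with 𝒰 the principal SD bivector of the Weyl tensor.) -/
import Mathlib


open Module LinearMap

noncomputable section

/-- The endomorphism `W(x) := 3Ω·B(u,x)·u + Ω·x + B(u,x)·z + B(z,x)·u` of `V`,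
representing the self-dual Weyl tensor `𝒲 = 3Ω·𝒰⊗𝒰 + Ω·𝒢 + 𝒰⊗̃𝒵` of a space-time
admitting a 2+2 umbilical structure acting on self-dual bivectors. -/
def Wmap {V : Type*} [AddCommGroup V] [Module ℂ V]
    (B : LinearMap.BilinForm ℂ V) (Ω : ℂ) (u z : V) : V →ₗ[ℂ] V :=
  (3 * Ω) • (B u).smulRight u + Ω • LinearMap.id + (B u).smulRight z + (B z).smulRight u

end

/-- Theorem 4 case (iii) and Proposition 4, type D: if `z = 0` and
`Ω ≠ 0` then `W(u) = -2Ω·u`, `W(w) = Ω·w` for all `w ⊥ u`,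
`(W - Ω·id)∘(W + 2Ω·id) = 0`, and `W - Ω·id ≠ 0 ≠ W + 2Ω·id`. -/
theorem typeD_case
    {V : Type*} [AddCommGroup V] [Module ℂ V] [FiniteDimensional ℂ V]
    (hdim : finrank ℂ V = 3)
    (B : LinearMap.BilinForm ℂ V) (hBsym : ∀ x y, B x y = B y x)
    (hBnd : B.Nondegenerate)
    (Ω : ℂ) (u z : V) (hu : B u u = -1) (huz : B u z = 0)
    (hz : z = 0) (hΩ : Ω ≠ 0) :
    Wmap B Ω u z u = (-2 * Ω) • u ∧
    (∀ w : V, B u w = 0 → Wmap B Ω u z w = Ω • w) ∧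
    (Wmap B Ω u z - Ω • LinearMap.id) ∘ₗ (Wmap B Ω u z + (2 * Ω) • LinearMap.id) = 0 ∧
    Wmap B Ω u z - Ω • LinearMap.id ≠ 0 ∧
    Wmap B Ω u z + (2 * Ω) • LinearMap.id ≠ 0 := by
  have hu0 : u ≠ 0 := by
    intro h
    rw [h] at hu
    simp at hu
  have hW : ∀ x : V, Wmap B Ω u z x = (3 * Ω * B u x) • u + Ω • x := by
    intro x
    simp only [Wmap, hz, LinearMap.add_apply, LinearMap.smul_apply, LinearMap.id_apply,
      LinearMap.smulRight_apply, map_zero, LinearMap.zero_apply, smul_zero, zero_smul,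
      add_zero, smul_smul]
  refine ⟨?_, ?_, ?_, ?_, ?_⟩
  · rw [hW, hu]
    module
  · intro w hw
    rw [hW, hw]
    module
  · ext x
    simp only [LinearMap.comp_apply, LinearMap.sub_apply, LinearMap.add_apply,
      LinearMap.smul_apply, LinearMap.id_apply, LinearMap.zero_apply, hW, map_add, map_smul,
      hu]
    match_scalars <;> ring
  · intro h
    have := LinearMap.congr_fun h u
    simp only [LinearMap.sub_apply, LinearMap.smul_apply, LinearMap.id_apply,
      LinearMap.zero_apply, hW, hu] at this
    have h2 : (-(3 * Ω)) • u = 0 := by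
      rw [← this]; module
    rcases smul_eq_zero.mp h2 with h3 | h3
    · exact hΩ (by linear_combination h3 / -3)
    · exact hu0 h3
  · intro h
    -- find nonzero w with B u w = 0
    have hker : LinearMap.ker (B u) ≠ ⊥ := by
      intro hbot
      have h1 := LinearMap.finrank_range_add_finrank_ker (B u)
      rw [hbot, finrank_bot, hdim] at h1
      have h2 : finrank ℂ (LinearMap.range (B u)) ≤ finrank ℂ ℂ :=
        Submodule.finrank_le _
      simp [Module.finrank_self] at h2
      omega
    obtain ⟨w, hwmem, hw0⟩ := Submodule.exists_mem_ne_zero_of_ne_bot hker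
    have hw : B u w = 0 := hwmem
    have := LinearMap.congr_fun h w
    simp only [LinearMap.add_apply, LinearMap.smul_apply, LinearMap.id_apply,
      LinearMap.zero_apply, hW, hw] at this
    have h2 : (3 * Ω) • w = 0 := by rw [← this]; module
    rcases smul_eq_zero.mp h2 with h3 | h3
    · exact hΩ (by linear_combination h3 / 3)
    · exact hw0 h3
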